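/- Let f : ℝ^d → ℝ be convex and L-smooth with minimizer set Ω_* and minimum f_*. For the gradient descent iteration x_{τ+1} = x_τ − ∇f(x_τ)/L, if f satisfies HEB with θ = 1/2 and constant c on S_{ε₀} where f(x₀) − f_* ≤ ε₀, then f(x_t) − f_* ≤ ε₀/2^k whenever t ≥ k⌈c²L⌉; i.e., gradient descent converges linearly with iteration complexity O(c²L log(ε₀/ε)). -/

import Mathlib

set_option maxHeartbeats 1000000

open Set InnerProductSpace

local notation "⟪" a ", " b "⟫" => inner (𝕜 := ℝ) a b

variable {E : Type*} [NormedAddCommGroup E] [InnerProductSpace ℝ E] [CompleteSpace E]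

lemma lineHasDerivAt (f : E → ℝ) (g : E) (x v : E) (t : ℝ)
    (h : HasGradientAt f g (x + t • v)) :
    HasDerivAt (fun s : ℝ => f (x + s • v)) ⟪g, v⟫ t := by
  have h1 : HasDerivAt (fun s : ℝ => x + s • v) v t := by
    simpa using (hasDerivAt_id t).smul_const v |>.const_add x
  have := h.hasFDerivAt.comp_hasDerivAt t h1
  simp at this
  exact this

lemma convex_lower (f : E → ℝ) (f' : E → E) (hconv : ConvexOn ℝ univ f)
    (hgrad : ∀ x, HasGradientAt f (f' x) x) (x z : E) :
    f x + ⟪f' x, z - x⟫ ≤ f z := by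
  set g : ℝ → ℝ := fun s => f (x + s • (z - x)) with hg
  have hderiv : HasDerivAt g ⟪f' x, z - x⟫ 0 := by
    have := lineHasDerivAt f (f' x) x (z - x) 0 (by simpa using hgrad x)
    simpa using this
  have hgconv : ConvexOn ℝ univ g := by
    have := hconv.comp_affineMap (AffineMap.lineMap x z : ℝ →ᵃ[ℝ] E)
    simp only [preimage_univ] at this
    convert this using 1
    exacts [rfl, rfl, rfl, rfl, by funext s; simp [g, AffineMap.lineMap_apply, add_comm]]
  have := hgconv.le_slope_of_hasDerivAt (mem_univ (0:ℝ)) (mem_univ (1:ℝ)) one_pos hderiv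
  rw [slope_def_field] at this
  simp only [g, zero_smul, add_zero, one_smul] at this
  have h1 : x + (z - x) = z := by abel
  rw [h1] at this
  have : ⟪f' x, z - x⟫ ≤ f z - f x := by
    simpa [div_one] using this
  linarith

lemma smooth_upper (f : E → ℝ) (f' : E → E) (L : ℝ) (hL : 0 < L)
    (hgrad : ∀ x, HasGradientAt f (f' x) x)
    (hlip : ∀ x y, ‖f' x - f' y‖ ≤ L * ‖x - y‖) (x y : E) :
    f y ≤ f x + ⟪f' x, y - x⟫ + L / 2 * ‖y - x‖ ^ 2 := by
  set v := y - x with hv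
  set φ : ℝ → ℝ := fun t => f (x + t • v) - t * ⟪f' x, v⟫ - L * ‖v‖ ^ 2 * t ^ 2 / 2 with hφ
  have hφ' : ∀ t : ℝ, HasDerivAt φ
      (⟪f' (x + t • v), v⟫ - ⟪f' x, v⟫ - L * ‖v‖ ^ 2 * t) t := by
    intro t
    have h1 := lineHasDerivAt f (f' (x + t • v)) x v t (hgrad _)
    have h2 : HasDerivAt (fun s : ℝ => s * ⟪f' x, v⟫) ⟪f' x, v⟫ t := by
      simpa using (hasDerivAt_id t).mul_const (⟪f' x, v⟫)
    have h3 : HasDerivAt (fun s : ℝ => L * ‖v‖ ^ 2 * s ^ 2 / 2) (L * ‖v‖ ^ 2 * t) t := by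
      have := ((hasDerivAt_pow 2 t).const_mul (L * ‖v‖ ^ 2)).div_const 2
      convert this using 1
      exacts [rfl, rfl, by simp; ring]
    exact (h1.sub h2).sub h3
  have hdiff : Differentiable ℝ φ := fun t => (hφ' t).differentiableAt
  have hanti : AntitoneOn φ (Icc (0:ℝ) 1) := by
    apply antitoneOn_of_deriv_nonpos (convex_Icc 0 1) hdiff.continuous.continuousOn
      (hdiff.differentiableOn)
    intro t ht
    rw [interior_Icc, mem_Ioo] at ht
    rw [(hφ' t).deriv]
    have hb : ⟪f' (x + t • v) - f' x, v⟫ ≤ L * ‖v‖ ^ 2 * t := by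
      calc ⟪f' (x + t • v) - f' x, v⟫ ≤ ‖f' (x + t • v) - f' x‖ * ‖v‖ := real_inner_le_norm _ _
        _ ≤ L * ‖x + t • v - x‖ * ‖v‖ := by
            have := hlip (x + t • v) x
            have hv0 : (0:ℝ) ≤ ‖v‖ := norm_nonneg _
            nlinarith [norm_nonneg (f' (x + t • v) - f' x)]
        _ = L * ‖v‖ ^ 2 * t := by
            rw [add_sub_cancel_left, norm_smul]
            simp [abs_of_pos ht.1]
            ring
    rw [inner_sub_left] at hb
    linarith
  have h01 := hanti (by simp : (0:ℝ) ∈ Icc (0:ℝ) 1) (by simp : (1:ℝ) ∈ Icc (0:ℝ) 1) zero_le_one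
  simp only [φ, zero_smul, add_zero, one_smul, zero_pow, mul_zero, zero_mul, sub_zero,
    one_pow, mul_one, one_mul] at h01
  have h1 : x + v = y := by simp [hv]
  rw [h1] at h01
  linarith

theorem gd_linear_convergence_heb_half {d : ℕ} (L c ε₀ : ℝ)
    (hL : 0 < L) (hc : 0 < c) (hε₀ : 0 < ε₀)
    (f : EuclideanSpace ℝ (Fin d) → ℝ)
    (f' : EuclideanSpace ℝ (Fin d) → EuclideanSpace ℝ (Fin d))
    (hconv : ConvexOn ℝ Set.univ f)
    (hgrad : ∀ x, HasGradientAt f (f' x) x)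
    (hlip : ∀ x y, ‖f' x - f' y‖ ≤ L * ‖x - y‖)
    (Ω : Set (EuclideanSpace ℝ (Fin d)))
    (hΩ : Ω = {x | ∀ y, f x ≤ f y}) (hne : Ω.Nonempty)
    (fstar : ℝ) (hfs : ∀ x ∈ Ω, f x = fstar)
    (heb : ∀ x, f x - fstar ≤ ε₀ →
        Metric.infDist x Ω ≤ c * (f x - fstar) ^ (1/2 : ℝ))
    (x : ℕ → EuclideanSpace ℝ (Fin d))
    (hiter : ∀ τ : ℕ, x (τ + 1) = x τ - (1 / L) • f' (x τ))
    (h0 : f (x 0) - fstar ≤ ε₀) :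
    ∀ k t : ℕ, k * ⌈c ^ 2 * L⌉₊ ≤ t → f (x t) - fstar ≤ ε₀ / 2 ^ k := by
  obtain ⟨z₀, hz₀⟩ := hne
  -- fstar is the minimum value
  have hmin : ∀ w, fstar ≤ f w := by
    intro w
    rw [← hfs z₀ hz₀]
    exact (hΩ ▸ hz₀) w
  -- descent lemma consequence: one step decreases f by ‖g‖²/(2L)
  have hdesc : ∀ τ : ℕ, f (x (τ + 1)) ≤ f (x τ) - ‖f' (x τ)‖ ^ 2 / (2 * L) := by
    intro τ
    have h := smooth_upper f f' L hL hgrad hlip (x τ) (x (τ + 1))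
    rw [hiter τ] at h ⊢
    have hsub : x τ - (1 / L) • f' (x τ) - x τ = -((1 / L) • f' (x τ)) := by abel
    rw [hsub] at h
    rw [inner_neg_right, real_inner_smul_right, real_inner_self_eq_norm_sq,
      norm_neg, norm_smul] at h
    have habs : ‖(1 / L : ℝ)‖ = 1 / L := by
      rw [Real.norm_eq_abs, abs_of_pos (by positivity)]
    rw [habs] at h
    have hL' : L ≠ 0 := ne_of_gt hL
    calc f (x τ - (1 / L) • f' (x τ))
        ≤ f (x τ) + -(1 / L * ‖f' (x τ)‖ ^ 2) + L / 2 * (1 / L * ‖f' (x τ)‖) ^ 2 := h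
      _ = f (x τ) - ‖f' (x τ)‖ ^ 2 / (2 * L) := by field_simp; ring
  have hmono : ∀ s t : ℕ, s ≤ t → f (x t) ≤ f (x s) := by
    intro s t hst
    induction t with
    | zero => simp_all
    | succ n ih =>
      rcases Nat.lt_or_ge s (n+1) with hlt | hge
      · have := hdesc n
        have h2 : ‖f' (x n)‖ ^ 2 / (2 * L) ≥ 0 := by positivity
        have := ih (Nat.lt_succ_iff.mp hlt)
        linarith [hdesc n]
      · have : s = n + 1 := le_antisymm hst hge
        simp [this]
  -- one-step inequality against any z
  have hstep : ∀ (τ : ℕ) (z : EuclideanSpace ℝ (Fin d)),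
      ‖x (τ + 1) - z‖ ^ 2 ≤ ‖x τ - z‖ ^ 2 - 2 / L * (f (x (τ + 1)) - f z) := by
    intro τ z
    set g := f' (x τ) with hgdef
    have hlow := convex_lower f f' hconv hgrad (x τ) z
    have hup := hdesc τ
    have hzx : ⟪g, z - x τ⟫ = -⟪g, x τ - z⟫ := by
      rw [← inner_neg_right]; congr 1; abel
    rw [hzx] at hlow
    have hexp : x (τ + 1) - z = (x τ - z) - (1 / L) • g := by rw [hiter τ]; abel
    rw [hexp, norm_sub_sq_real, real_inner_smul_right, norm_smul, Real.norm_eq_abs,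
      abs_of_pos (by positivity : (0:ℝ) < 1 / L)]
    have hinner : ⟪x τ - z, g⟫ = ⟪g, x τ - z⟫ := real_inner_comm _ _
    rw [hinner]
    have hL' : L ≠ 0 := ne_of_gt hL
    have key : f (x (τ + 1)) - f z ≤ ⟪g, x τ - z⟫ - ‖g‖ ^ 2 / (2 * L) := by linarith
    have h1 : 2 / L * (f (x (τ + 1)) - f z) ≤ 2 / L * (⟪g, x τ - z⟫ - ‖g‖ ^ 2 / (2 * L)) := by
      apply mul_le_mul_of_nonneg_left key (by positivity)
    have h2 : 2 / L * (⟪g, x τ - z⟫ - ‖g‖ ^ 2 / (2 * L)) =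
        2 * (1 / L * ⟪g, x τ - z⟫) - (1 / L * ‖g‖) ^ 2 := by field_simp
    linarith
  -- telescoping
  have htel : ∀ (z : EuclideanSpace ℝ (Fin d)), z ∈ Ω → ∀ (s T : ℕ),
      2 / L * T * (f (x (s + T)) - fstar) + ‖x (s + T) - z‖ ^ 2 ≤ ‖x s - z‖ ^ 2 := by
    intro z hz s T
    induction T with
    | zero => simp
    | succ n ih =>
      have hst := hstep (s + n) z
      rw [hfs z hz] at hst
      have hm : f (x (s + n + 1)) ≤ f (x (s + n)) := by
        have := hmono (s + n) (s + n + 1) (by omega)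
        linarith
      have hmn : f (x (s + (n+1))) - fstar ≤ f (x (s + n)) - fstar := by
        have : s + (n + 1) = s + n + 1 := by omega
        rw [this]; linarith
      have hge : 0 ≤ f (x (s + n)) - fstar := by linarith [hmin (x (s + n))]
      have hge2 : 0 ≤ f (x (s + (n+1))) - fstar := by linarith [hmin (x (s + (n+1)))]
      have h2L : (0:ℝ) < 2 / L := by positivity
      push_cast
      show 2 / L * ((n:ℝ) + 1) * (f (x (s + n + 1)) - fstar) + ‖x (s + n + 1) - z‖ ^ 2
          ≤ ‖x s - z‖ ^ 2
      have hmn' : f (x (s + n + 1)) - fstar ≤ f (x (s + n)) - fstar := hmn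
      have hx : 2 / L * (n:ℝ) * (f (x (s + n + 1)) - fstar)
          ≤ 2 / L * (n:ℝ) * (f (x (s + n)) - fstar) :=
        mul_le_mul_of_nonneg_left hmn' (by positivity)
      linarith
  -- Ω is closed
  have hcont : Continuous f := by
    rw [continuous_iff_continuousAt]
    exact fun w => (hgrad w).differentiableAt.continuousAt
  have hclosed : IsClosed Ω := by
    rw [hΩ]
    have : {x : EuclideanSpace ℝ (Fin d) | ∀ y, f x ≤ f y} = ⋂ y, {x | f x ≤ f y} := by
      ext w; simp
    rw [this]
    exact isClosed_iInter fun y => isClosed_le hcont continuous_const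
  set T := ⌈c ^ 2 * L⌉₊ with hT
  have hT1 : 1 ≤ T := Nat.one_le_iff_ne_zero.mpr (by
    simp only [hT, ne_eq, Nat.ceil_eq_zero, not_le]
    positivity)
  have hTc : c ^ 2 * L ≤ T := Nat.le_ceil _
  -- stage lemma
  have hstage : ∀ s : ℕ, f (x s) - fstar ≤ ε₀ →
      f (x (s + T)) - fstar ≤ (f (x s) - fstar) / 2 := by
    intro s hs
    obtain ⟨z, hzΩ, hzdist⟩ := hclosed.exists_infDist_eq_dist ⟨z₀, hz₀⟩ (x s)
    have hd : ‖x s - z‖ = Metric.infDist (x s) Ω := by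
      rw [hzdist, dist_eq_norm]
    have hgap : 0 ≤ f (x s) - fstar := by linarith [hmin (x s)]
    have hheb := heb (x s) hs
    have hsq : ((f (x s) - fstar) ^ (1/2 : ℝ)) ^ 2 = f (x s) - fstar := by
      rw [← Real.rpow_natCast ((f (x s) - fstar) ^ (1/2:ℝ)) 2, ← Real.rpow_mul hgap]
      norm_num
    have hnormsq : ‖x s - z‖ ^ 2 ≤ c ^ 2 * (f (x s) - fstar) := by
      have h1 : ‖x s - z‖ ≤ c * (f (x s) - fstar) ^ (1/2:ℝ) := by rw [hd]; exact hheb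
      have h2 : (0:ℝ) ≤ ‖x s - z‖ := norm_nonneg _
      nlinarith [Real.rpow_nonneg hgap (1/2:ℝ)]
    have := htel z hzΩ s T
    have hgapT : 0 ≤ f (x (s + T)) - fstar := by linarith [hmin (x (s + T))]
    have hT0 : (0:ℝ) < T := by exact_mod_cast hT1
    have hkey : 2 / L * T * (f (x (s + T)) - fstar) ≤ c ^ 2 * (f (x s) - fstar) := by
      nlinarith [sq_nonneg ‖x (s + T) - z‖]
    -- c^2 * L ≤ T so c^2 * gap_s ≤ (T/L) * gap_s
    have hkey' : 2 * (T:ℝ) * (f (x (s + T)) - fstar) ≤ L * (c ^ 2 * (f (x s) - fstar)) := by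
      have hm2 := mul_le_mul_of_nonneg_left hkey hL.le
      have hL' : L ≠ 0 := ne_of_gt hL
      calc 2 * (T:ℝ) * (f (x (s + T)) - fstar)
          = L * (2 / L * T * (f (x (s + T)) - fstar)) := by field_simp
        _ ≤ L * (c ^ 2 * (f (x s) - fstar)) := hm2
    have h2 : L * (c ^ 2 * (f (x s) - fstar)) ≤ (T:ℝ) * (f (x s) - fstar) := by
      have : L * c ^ 2 ≤ (T:ℝ) := by nlinarith
      nlinarith
    nlinarith
  -- main induction
  have hmain : ∀ k : ℕ, f (x (k * T)) - fstar ≤ ε₀ / 2 ^ k := by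
    intro k
    induction k with
    | zero => simpa using h0
    | succ k ih =>
      have hle : f (x (k * T)) - fstar ≤ ε₀ := by
        have h2k : (1:ℝ) ≤ 2 ^ k := one_le_pow₀ (by norm_num : (1:ℝ) ≤ 2)
        calc f (x (k * T)) - fstar ≤ ε₀ / 2 ^ k := ih
          _ ≤ ε₀ := div_le_self hε₀.le h2k
      have := hstage (k * T) hle
      have heq : k * T + T = (k + 1) * T := by ring
      rw [heq] at this
      calc f (x ((k+1) * T)) - fstar ≤ (f (x (k * T)) - fstar) / 2 := this
        _ ≤ (ε₀ / 2 ^ k) / 2 := by linarith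
        _ = ε₀ / 2 ^ (k + 1) := by rw [pow_succ]; ring
  intro k t hkt
  calc f (x t) - fstar ≤ f (x (k * T)) - fstar := by
        linarith [hmono (k * T) t hkt]
    _ ≤ ε₀ / 2 ^ k := hmain k
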